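/- The poset F_6 = L ⊕ ω, where L is the poset on ℕ × {0,1} with (i,x) < (j,y) iff i > j, is not reversible: there exists an order-preserving bijection from F_6 to itself whose inverse is not order-preserving. -/

import Mathlib

/-- The poset `L` on `ℕ × {0,1}` with `(i,x) < (j,y)` iff `i > j`. -/
def L6 : Type := ℕ × Bool

/-- The order relation of `L6`. -/
def L6.le (a b : ℕ × Bool) : Prop := b.1 < a.1 ∨ a = b

instance : PartialOrder L6 where
  le := L6.le
  le_refl _ := Or.inr rfl
  le_trans a b c hab hbc := by
    rcases hab with h | h
    · rcases hbc with h' | h'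
      · exact Or.inl (h'.trans h)
      · exact Or.inl (h' ▸ h)
    · rcases hbc with h' | h'
      · exact Or.inl (h ▸ h')
      · exact Or.inr (h.trans h')
  le_antisymm a b hab hba := by
    rcases hab with h | h
    · rcases hba with h' | h'
      · exact absurd (h.trans h') (lt_irrefl _)
      · exact h'.symm
    · exact h

/-- `F₆ = L ⊕ ω`. -/
abbrev F6 : Type := L6 ⊕ₗ ℕ

/-- Build an element of `L6`. -/
def L6.mk (i : ℕ) (b : Bool) : L6 := (i, b)

/-- Forward map: shift both descending chains up by one, send the two top
elements of `L` to the bottom two elements of `ω`, and shift `ω` up by two. -/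
def gfun : L6 ⊕ ℕ → L6 ⊕ ℕ
  | Sum.inl p =>
    match (p : ℕ × Bool) with
    | (0, b) => Sum.inr (cond b 1 0)
    | (i + 1, b) => Sum.inl (L6.mk i b)
  | Sum.inr n => Sum.inr (n + 2)

/-- Inverse map. -/
def hfun : L6 ⊕ ℕ → L6 ⊕ ℕ
  | Sum.inl p =>
    match (p : ℕ × Bool) with
    | (i, b) => Sum.inl (L6.mk (i + 1) b)
  | Sum.inr 0 => Sum.inl (L6.mk 0 false)
  | Sum.inr 1 => Sum.inl (L6.mk 0 true)
  | Sum.inr (n + 2) => Sum.inr n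

lemma hg (y : L6 ⊕ ℕ) : hfun (gfun y) = y := by
  rcases y with ⟨i, b⟩ | n
  · rcases i with _ | i
    · cases b <;> rfl
    · rfl
  · rfl

lemma gh (y : L6 ⊕ ℕ) : gfun (hfun y) = y := by
  rcases y with ⟨i, b⟩ | n
  · rfl
  · rcases n with _ | _ | n <;> rfl

/-- The bijection on `F6`. -/
def myEquiv : F6 ≃ F6 where
  toFun x := toLex (gfun (ofLex x))
  invFun x := toLex (hfun (ofLex x))
  left_inv x := congrArg toLex (hg (ofLex x))
  right_inv x := congrArg toLex (gh (ofLex x))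

lemma myEquiv_apply (z : L6 ⊕ ℕ) : myEquiv (toLex z) = toLex (gfun z) := rfl

lemma L6_le_iff {a b : L6} : a ≤ b ↔ L6.le a b := Iff.rfl

lemma myEquiv_mono : Monotone myEquiv := by
  intro x y hxy
  rcases hx : ofLex x with ⟨i, b⟩ | n <;> rcases hy : ofLex y with ⟨j, c⟩ | m
  · -- both in L
    have hx' : x = toLex (Sum.inl (i, b)) := by exact congrArg toLex hx
    have hy' : y = toLex (Sum.inl (j, c)) := by exact congrArg toLex hy
    rw [hx', hy'] at hxy ⊢
    show toLex (gfun (Sum.inl (i, b))) ≤ toLex (gfun (Sum.inl (j, c)))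
    obtain ⟨h⟩ := hxy
    replace h : L6.le (i, b) (j, c) := h
    rcases h with h | h
    · -- j < i
      replace h : j < i := h
      rcases i with _ | i
      · omega
      · rcases j with _ | j
        · exact Sum.Lex.sep _ _
        · show toLex (Sum.inl (L6.mk i b)) ≤ toLex (Sum.inl (L6.mk j c))
          exact Sum.Lex.inl (show L6.le (i, b) (j, c) from Or.inl (by omega : j < i))
    · replace h : (i, b) = (j, c) := h
      obtain ⟨rfl, rfl⟩ : i = j ∧ b = c := Prod.mk.injEq .. ▸ h
      exact le_refl _
  · -- L ≤ ω
    have hx' : x = toLex (Sum.inl (i, b)) := by exact congrArg toLex hx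
    have hy' : y = toLex (Sum.inr m) := by rw [← hy]; rfl
    rw [hx', hy']
    show toLex (gfun (Sum.inl (i, b))) ≤ toLex (gfun (Sum.inr m))
    rcases i with _ | i
    · show toLex (Sum.inr (cond b 1 0)) ≤ toLex (Sum.inr (m + 2))
      exact Sum.Lex.inr (by cases b <;> simp)
    · exact Sum.Lex.sep _ _
  · -- ω ≤ L : impossible
    have hx' : x = toLex (Sum.inr n) := by rw [← hx]; rfl
    have hy' : y = toLex (Sum.inl (j, c)) := by exact congrArg toLex hy
    rw [hx', hy'] at hxy
    cases hxy
  · -- both in ω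
    have hx' : x = toLex (Sum.inr n) := by rw [← hx]; rfl
    have hy' : y = toLex (Sum.inr m) := by rw [← hy]; rfl
    rw [hx', hy'] at hxy ⊢
    obtain ⟨h⟩ := hxy
    show toLex (gfun (Sum.inr n)) ≤ toLex (gfun (Sum.inr m))
    exact Sum.Lex.inr (by omega)

/-- The poset `F6` is not reversible. -/
theorem F6_not_reversible : ∃ f : F6 ≃ F6, Monotone f ∧ ¬ Monotone f.symm := by
  refine ⟨myEquiv, myEquiv_mono, ?_⟩
  intro hmono
  have h01 : (toLex (Sum.inr 0) : F6) ≤ toLex (Sum.inr 1) :=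
    Sum.Lex.inr (by omega)
  have key := hmono h01
  have h0 : myEquiv.symm (toLex (Sum.inr 0)) = toLex (Sum.inl (L6.mk 0 false)) := rfl
  have h1 : myEquiv.symm (toLex (Sum.inr 1)) = toLex (Sum.inl (L6.mk 0 true)) := rfl
  rw [h0, h1] at key
  obtain ⟨h⟩ := key
  replace h : L6.le (0, false) (0, true) := h
  rcases h with h | h
  · exact absurd (show (0 : ℕ) < 0 from h) (lt_irrefl _)
  · exact Bool.noConfusion (congrArg (fun p : ℕ × Bool => p.2) h)
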